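/- In a left distributive algebra, define p^(0) = p and p^(n+1) = p·p^(n). Then for all n and all i ≤ n, p^(n+1) = p^(i)·p^(n). -/
import Mathlib

/-- Iterated dot powers: p^(0) = p, p^(n+1) = p · p^(n). -/
def dotPow {A : Type*} (mul : A → A → A) (p : A) : ℕ → A
  | 0 => p
  | n + 1 => mul p (dotPow mul p n)

/-- In a left distributive algebra, p^(n+1) = p^(i) · p^(n) for all i ≤ n. -/
theorem dotPow_succ_eq {A : Type*} (mul : A → A → A)
    (hld : ∀ a b c, mul a (mul b c) = mul (mul a b) (mul a c))
    (p : A) : ∀ n : ℕ, ∀ i ≤ n, dotPow mul p (n + 1) = mul (dotPow mul p i) (dotPow mul p n) := by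
  intro n
  induction n with
  | zero =>
    intro i hi
    interval_cases i
    rfl
  | succ m ih =>
    intro i hi
    cases i with
    | zero => rfl
    | succ j =>
      have hj : j ≤ m := Nat.succ_le_succ_iff.mp hi
      show mul p (dotPow mul p (m + 1)) = mul (mul p (dotPow mul p j)) (mul p (dotPow mul p m))
      rw [← hld, ← ih j hj]
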